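/- Let L be a generalized Laplacian on V with unique stationary distribution μ (assuming det(L^{(v)}) ≠ 0). Fix an ordered pair (u*, v*) of distinct vertices and define the perturbed matrix L(ε) = L + ε(E_{v*u*} − E_{u*u*}), where E_{ab} is the matrix with a single 1 in row a, column b. Then for all ε in a neighborhood of 0 the matrix L(ε)^{(u*)} is invertible, the stationary distribution μ(ε) of L(ε) depends differentiably on ε, and its derivative δ = dμ(ε)/dε at ε = 0 satisfies L^{(u*)} δ = −μ_{u*} e_{v*}. -/

import Mathlib

open Matrix Filter

private lemma diff_det_aux {V : Type*} [Fintype V] [DecidableEq V]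
    (f : ℝ → Matrix V V ℝ) (hf : ∀ i j, Differentiable ℝ fun ε => f ε i j) :
    Differentiable ℝ fun ε => (f ε).det := by
  simp only [Matrix.det_apply']
  exact Differentiable.fun_sum fun σ _ =>
    ((Differentiable.fun_finset_prod (fun i _ => hf (σ i) i))).const_mul _

theorem stmt6 {V : Type*} [Fintype V] [DecidableEq V] (L : Matrix V V ℝ)
    (hcol : ∀ u : V, ∑ v : V, L v u = 0) (ustar vstar : V) (hne : ustar ≠ vstar)
    (hdet : (L.updateRow ustar (1 : V → ℝ)).det ≠ 0)
    (μ0 : V → ℝ) (hμ0 : (L.updateRow ustar (1 : V → ℝ)).mulVec μ0 = Pi.single ustar 1) :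
    ∃ μ : ℝ → V → ℝ, ∃ δ : V → ℝ,
      (∀ᶠ ε in nhds (0 : ℝ),
        ((L + ε • (Matrix.single vstar ustar (1 : ℝ) -
            Matrix.single ustar ustar (1 : ℝ))).updateRow ustar
            (1 : V → ℝ)).det ≠ 0 ∧
        ((L + ε • (Matrix.single vstar ustar (1 : ℝ) -
            Matrix.single ustar ustar (1 : ℝ))).updateRow ustar
            (1 : V → ℝ)).mulVec (μ ε) = Pi.single ustar 1 ∧
        DifferentiableAt ℝ μ ε) ∧
      HasDerivAt μ δ 0 ∧
      (L.updateRow ustar (1 : V → ℝ)).mulVec δ = (-(μ0 ustar)) • (Pi.single vstar 1 : V → ℝ) := by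
  classical
  set A : Matrix V V ℝ := L.updateRow ustar (1 : V → ℝ) with hA
  set B : Matrix V V ℝ := Matrix.single vstar ustar (1 : ℝ) with hB
  set e : V → ℝ := Pi.single ustar 1 with he
  -- key rewriting
  have hkey : ∀ ε : ℝ, ((L + ε • (Matrix.single vstar ustar (1 : ℝ) -
      Matrix.single ustar ustar (1 : ℝ))).updateRow ustar (1 : V → ℝ)) = A + ε • B := by
    intro ε
    ext i j
    by_cases hi : i = ustar
    · subst hi
      simp [hA, hB, Matrix.updateRow_apply, Matrix.single, hne.symm]
    · have hnot : ¬(ustar = i ∧ ustar = j) := fun h => hi h.1.symm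
      simp [hA, hB, Matrix.updateRow_apply, hi, Matrix.single, Matrix.sub_apply, hnot]
  set N : ℝ → Matrix V V ℝ := fun ε => A + ε • B with hN
  have hNentry : ∀ i j, Differentiable ℝ fun ε => N ε i j := by
    intro i j
    simp only [hN, Matrix.add_apply, Matrix.smul_apply, smul_eq_mul]
    exact (differentiable_const _).add (differentiable_id.mul (differentiable_const _))
  set d : ℝ → ℝ := fun ε => (N ε).det with hd
  have hddiff : Differentiable ℝ d := diff_det_aux N hNentry
  have hN0 : N 0 = A := by simp [hN]
  have hd0 : d 0 ≠ 0 := by simpa [hd, hN0] using hdet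
  set μ : ℝ → V → ℝ := fun ε => (d ε)⁻¹ • (N ε).cramer e with hμ
  -- mulVec identity when d ε ≠ 0
  have hsol : ∀ ε : ℝ, d ε ≠ 0 → (N ε).mulVec (μ ε) = e := by
    intro ε hε
    rw [hμ]
    simp only [Matrix.mulVec_smul, Matrix.mulVec_cramer]
    rw [smul_smul, inv_mul_cancel₀ hε, one_smul]
  -- differentiability of μ at points where d ε ≠ 0
  have hμdiff : ∀ ε : ℝ, d ε ≠ 0 → DifferentiableAt ℝ μ ε := by
    intro ε hε
    rw [differentiableAt_pi]
    intro v
    have : (fun ε => μ ε v) = fun ε => (d ε)⁻¹ * ((N ε).updateCol v e).det := by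
      funext ε; simp [hμ, Matrix.cramer_apply]
    rw [this]
    have hdet2 : DifferentiableAt ℝ (fun ε => ((N ε).updateCol v e).det) ε := by
      refine (diff_det_aux _ ?_).differentiableAt
      intro i j
      simp only [Matrix.updateCol_apply]
      by_cases hj : j = v
      · simp [hj]
      · simpa [hj] using hNentry i j
    exact (((hddiff ε).inv hε)).mul hdet2
  -- eventual nonvanishing of d
  have hev : ∀ᶠ ε in nhds (0 : ℝ), d ε ≠ 0 :=
    (hddiff.continuous.continuousAt).eventually_ne hd0
  have hdiff0 : DifferentiableAt ℝ μ 0 := hμdiff 0 hd0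
  set δ : V → ℝ := deriv μ 0 with hδ
  have hder : HasDerivAt μ δ 0 := hdiff0.hasDerivAt
  -- μ 0 = μ0
  have hInv : Invertible A := A.invertibleOfIsUnitDet (isUnit_iff_ne_zero.2 hdet)
  have hμ00 : μ 0 = μ0 := by
    have h1 : A.mulVec (μ 0) = e := by simpa [hN0] using hsol 0 hd0
    have h2 : A.mulVec μ0 = e := hμ0
    exact Matrix.mulVec_injective_of_invertible A (h1.trans h2.symm)
  -- derivative identity
  have hcomp : ∀ v, HasDerivAt (fun ε => μ ε v) (δ v) 0 := fun v => hasDerivAt_pi.1 hder v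
  have hmain : A.mulVec δ = (-(μ0 ustar)) • (Pi.single vstar 1 : V → ℝ) := by
    funext v
    have hF : HasDerivAt (fun ε => ((N ε).mulVec (μ ε)) v)
        (∑ j, (B v j * μ0 j + A v j * δ j)) 0 := by
      have : ∀ j, HasDerivAt (fun ε => N ε v j * μ ε j) (B v j * μ0 j + A v j * δ j) 0 := by
        intro j
        have h1 : HasDerivAt (fun ε : ℝ => N ε v j) (B v j) 0 := by
          simp only [hN, Matrix.add_apply, Matrix.smul_apply, smul_eq_mul]
          simpa using ((hasDerivAt_id (0:ℝ)).mul_const (B v j)).const_add (A v j)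
        have h2 := (h1.mul (hcomp j))
        have hval : N 0 v j = A v j := by simp [hN0]
        have hval2 : μ 0 j = μ0 j := by rw [hμ00]
        rw [hval, hval2] at h2
        exact h2
      simpa [Matrix.mulVec, dotProduct] using HasDerivAt.fun_sum (fun j _ => this j)
    -- F is eventually constant
    have hFconst : (fun ε => ((N ε).mulVec (μ ε)) v) =ᶠ[nhds (0:ℝ)] fun _ => e v := by
      filter_upwards [hev] with ε hε
      rw [hsol ε hε]
    have hF0 : HasDerivAt (fun ε => ((N ε).mulVec (μ ε)) v) 0 0 :=
      (hasDerivAt_const (0:ℝ) (e v)).congr_of_eventuallyEq hFconst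
    have hzero : (∑ j, (B v j * μ0 j + A v j * δ j)) = 0 := hF.unique hF0
    have hBμ : ∑ j, B v j * μ0 j = (μ0 ustar) * (Pi.single vstar 1 : V → ℝ) v := by
      simp only [hB, Matrix.single]
      by_cases hv : v = vstar
      · subst hv
        rw [Finset.sum_eq_single ustar]
        · simp [Pi.single_apply]
        · intro b _ hb; simp [of_apply, hb.symm]
        · simp
      · rw [Finset.sum_eq_zero]
        · simp [Pi.single_apply, hv]
        · intro b _
          have hnot : ¬(vstar = v ∧ ustar = b) := fun h => hv h.1.symm
          simp [Matrix.of_apply, hnot]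
    rw [Finset.sum_add_distrib, hBμ] at hzero
    have : A.mulVec δ v = ∑ j, A v j * δ j := by simp [Matrix.mulVec, dotProduct]
    rw [this]
    simp only [Pi.smul_apply, smul_eq_mul]
    linarith
  refine ⟨μ, δ, ?_, hder, hmain⟩
  filter_upwards [hev, eventually_of_mem (IsOpen.mem_nhds (isOpen_ne.preimage hddiff.continuous) hd0) (fun x hx => hx)] with ε hε _
  refine ⟨by rw [hkey]; exact hε, by rw [hkey]; exact hsol ε hε, hμdiff ε hε⟩
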